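/- There exists an absolute constant C > 0 with the following property: for every h > 0, every b = (b₁, b₂) ∈ ℝ² with b₁ > 0, and every function v : ℝ² → ℝ² continuously differentiable on an open neighborhood of the closure of the square Q_h(b) = (b₁, b₁+h) × (b₂, b₂+h) and satisfying ∫_{Q_h(b)} x₁ v dA = 0 (componentwise), the boundary stabilization satisfies the upper bound h⁻¹ ∫_{∂Q_h(b)} 2π x₁ |v|² dH¹ ≤ C ρ² ∫_{Q_h(b)} x₁ |∇v|² dA, where ρ = (b₁+h)/b₁, ∂Q_h(b) carries the one-dimensional Hausdorff measure H¹, |∇v|² is the sum of the squared Euclidean norms of the gradients of the two components, and dA is the two-dimensional Lebesgue measure. -/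

import Mathlib

open MeasureTheory Real

set_option maxHeartbeats 4000000
open Set
open scoped Interval

/-- The open square `(b₁, b₁+h) × (b₂, b₂+h)`. -/
def sqEl (b : ℝ × ℝ) (h : ℝ) : Set (ℝ × ℝ) :=
  Set.Ioo b.1 (b.1 + h) ×ˢ Set.Ioo b.2 (b.2 + h)

/-- Squared Euclidean norm of the gradient of a scalar field on `ℝ²`. -/
noncomputable def gradSq (v : ℝ × ℝ → ℝ) (x : ℝ × ℝ) : ℝ :=
  (fderiv ℝ v x (1, 0)) ^ 2 + (fderiv ℝ v x (0, 1)) ^ 2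

lemma sq_integral_le (μ : Measure ℝ) [IsFiniteMeasure μ] (g : ℝ → ℝ)
    (hg : Integrable g μ) (hg2 : Integrable (fun t => g t ^ 2) μ) :
    (∫ t, g t ∂μ) ^ 2 ≤ (μ univ).toReal * ∫ t, g t ^ 2 ∂μ := by
  set V : ℝ := (μ univ).toReal with hV
  set C1 : ℝ := ∫ t, g t ∂μ with hC1
  set C2 : ℝ := ∫ t, g t ^ 2 ∂μ with hC2
  have key : ∀ t0 : ℝ, g t0 * C1 ≤ (V * g t0 ^ 2 + C2) / 2 := by
    intro t0
    have h1 : ∫ t, g t0 * g t ∂μ = g t0 * C1 := integral_const_mul _ _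
    have h2 : ∫ t, (g t0 ^ 2 + g t ^ 2) / 2 ∂μ = (V * g t0 ^ 2 + C2) / 2 := by
      rw [integral_div, integral_add (integrable_const _) hg2, integral_const]
      simp [smul_eq_mul, mul_comm]
      rfl
    rw [← h1, ← h2]
    refine integral_mono (hg.const_mul _) (((integrable_const _).add hg2).div_const _) ?_
    intro t
    have := sq_nonneg (g t0 - g t)
    simp only [Pi.add_apply]
    nlinarith
  have lhsInt : Integrable (fun t0 => g t0 * C1) μ := hg.mul_const _
  have rhsInt : Integrable (fun t0 => (V * g t0 ^ 2 + C2) / 2) μ :=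
    ((hg2.const_mul _).add (integrable_const _)).div_const _
  have hmono := integral_mono lhsInt rhsInt key
  have e1 : ∫ t0, g t0 * C1 ∂μ = C1 ^ 2 := by
    rw [integral_mul_const]; ring
  have e2 : ∫ t0, (V * g t0 ^ 2 + C2) / 2 ∂μ = V * C2 := by
    rw [integral_div, integral_add (hg2.const_mul _) (integrable_const _),
      integral_const_mul, integral_const]
    have hVnn : 0 ≤ V := ENNReal.toReal_nonneg
    simp only [smul_eq_mul, measureReal_def, ← hV]
    ring
  rw [e1] at hmono; rw [e2] at hmono; linarith

instance (α β : ℝ) : IsFiniteMeasure (volume.restrict (Icc α β)) :=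
  ⟨by simp [Real.volume_Icc]⟩

lemma sq_setIntegral_Icc {α β : ℝ} (hab : α ≤ β) (g : ℝ → ℝ)
    (hg : IntegrableOn g (Icc α β)) (hg2 : IntegrableOn (fun t => g t ^ 2) (Icc α β)) :
    (∫ t in Icc α β, g t) ^ 2 ≤ (β - α) * ∫ t in Icc α β, g t ^ 2 := by
  have := sq_integral_le (volume.restrict (Icc α β)) g hg hg2
  rwa [Measure.restrict_apply_univ, Real.volume_Icc, ENNReal.toReal_ofReal (by linarith)] at this

lemma oneD_ftc {α h : ℝ} {g g' : ℝ → ℝ}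
    (hd : ∀ t ∈ Icc α (α + h), HasDerivAt g (g' t) t)
    (hc : ContinuousOn g' (Icc α (α + h)))
    {s t : ℝ} (hs : s ∈ Icc α (α + h)) (ht : t ∈ Icc α (α + h)) :
    g t = g s + ∫ τ in s..t, g' τ := by
  have hsub : uIcc s t ⊆ Icc α (α + h) := uIcc_subset_Icc hs ht
  have := intervalIntegral.integral_eq_sub_of_hasDerivAt
    (f := g) (f' := g') (a := s) (b := t)
    (fun x hx => hd x (hsub hx))
    ((hc.mono hsub).intervalIntegrable)
  linarith

lemma oneD_cont {α h : ℝ} {g g' : ℝ → ℝ}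
    (hd : ∀ t ∈ Icc α (α + h), HasDerivAt g (g' t) t) :
    ContinuousOn g (Icc α (α + h)) :=
  fun t ht => ((hd t ht).continuousAt).continuousWithinAt

lemma oneD_diff_bound {α h : ℝ} (hh : 0 < h) {g g' : ℝ → ℝ}
    (hd : ∀ t ∈ Icc α (α + h), HasDerivAt g (g' t) t)
    (hc : ContinuousOn g' (Icc α (α + h)))
    {s t : ℝ} (hs : s ∈ Icc α (α + h)) (ht : t ∈ Icc α (α + h)) :
    (g t - g s) ^ 2 ≤ h * ∫ τ in Icc α (α + h), g' τ ^ 2 := by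
  have hint : IntegrableOn g' (Icc α (α + h)) := hc.integrableOn_compact isCompact_Icc
  have hint2 : IntegrableOn (fun τ => |g' τ|) (Icc α (α + h)) := hint.abs
  have habs2 : IntegrableOn (fun τ => |g' τ| ^ 2) (Icc α (α + h)) := by
    have h' : IntegrableOn (fun τ => g' τ ^ 2) (Icc α (α + h)) := (hc.pow 2).integrableOn_compact isCompact_Icc
    simpa [sq_abs] using h'
  have hftc := oneD_ftc hd hc hs ht
  have h1 : |g t - g s| ≤ ∫ τ in Icc α (α + h), |g' τ| := by
    rw [hftc]
    have h2 : |∫ τ in s..t, g' τ| ≤ ∫ τ in Ι s t, |g' τ| := by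
      simpa using intervalIntegral.norm_integral_le_integral_norm_uIoc (f := g') (a := s) (b := t)
    refine le_trans (by simpa using h2) (setIntegral_mono_set hint2 ?_ ?_)
    · exact Filter.Eventually.of_forall fun τ => abs_nonneg _
    · exact HasSubset.Subset.eventuallyLE
        ((Set.uIoc_subset_uIcc : Ι s t ⊆ _).trans (uIcc_subset_Icc hs ht))
  have hCS : (∫ τ in Icc α (α + h), |g' τ|) ^ 2 ≤ h * ∫ τ in Icc α (α + h), g' τ ^ 2 := by
    have := sq_setIntegral_Icc (by linarith : α ≤ α + h) (fun τ => |g' τ|) hint2 habs2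
    simpa [sq_abs] using this
  have hnn : 0 ≤ ∫ τ in Icc α (α + h), |g' τ| :=
    setIntegral_nonneg measurableSet_Icc fun τ _ => abs_nonneg _
  calc (g t - g s) ^ 2 = |g t - g s| ^ 2 := (sq_abs _).symm
    _ ≤ (∫ τ in Icc α (α + h), |g' τ|) ^ 2 := by
        exact pow_le_pow_left₀ (abs_nonneg _) h1 2
    _ ≤ h * ∫ τ in Icc α (α + h), g' τ ^ 2 := hCS

lemma oneD_sq_bound {α h : ℝ} (hh : 0 < h) {g g' : ℝ → ℝ}
    (hd : ∀ t ∈ Icc α (α + h), HasDerivAt g (g' t) t)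
    (hc : ContinuousOn g' (Icc α (α + h)))
    {e : ℝ} (he : e ∈ Icc α (α + h)) :
    g e ^ 2 ≤ 2 / h * (∫ t in Icc α (α + h), g t ^ 2)
      + h * ∫ t in Icc α (α + h), g' t ^ 2 := by
  set I := Icc α (α + h) with hI
  have hg : ContinuousOn g I := oneD_cont hd
  have hgg' : ContinuousOn (fun t => 2 * g t * g' t) I := by
    exact ((continuousOn_const.mul hg).mul hc)
  have hd2 : ∀ t ∈ I, HasDerivAt (fun τ => g τ ^ 2) (2 * g t * g' t) t := by
    intro t ht
    have : HasDerivAt (fun τ => g τ ^ 2) _ t := (hd t ht).pow 2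
    simpa [mul_comm, mul_assoc, mul_left_comm] using this
  have hintg2 : IntegrableOn (fun t => g t ^ 2) I := (hg.pow 2).integrableOn_compact isCompact_Icc
  have hintg'2 : IntegrableOn (fun t => g' t ^ 2) I := (hc.pow 2).integrableOn_compact isCompact_Icc
  have hintgg' : IntegrableOn (fun t => |2 * g t * g' t|) I :=
    (hgg'.integrableOn_compact isCompact_Icc).abs
  set D : ℝ := ∫ t in I, |2 * g t * g' t| with hD
  have key : ∀ s ∈ I, g e ^ 2 ≤ g s ^ 2 + D := by
    intro s hs
    have hftc := oneD_ftc hd2 hgg' hs he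
    have habs : |∫ τ in s..e, 2 * g τ * g' τ| ≤ D := by
      have h2 : |∫ τ in s..e, 2 * g τ * g' τ| ≤ ∫ τ in Ι s e, |2 * g τ * g' τ| := by
        have := intervalIntegral.norm_integral_le_integral_norm_uIoc
          (f := fun τ => 2 * g τ * g' τ) (a := s) (b := e) (μ := volume)
        simpa only [Real.norm_eq_abs] using this
      refine h2.trans (setIntegral_mono_set hintgg' ?_ ?_)
      · exact Filter.Eventually.of_forall fun τ => abs_nonneg _
      · exact HasSubset.Subset.eventuallyLE
          ((Set.uIoc_subset_uIcc : Ι s e ⊆ _).trans (uIcc_subset_Icc hs he))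
    have hftc' : g e ^ 2 = g s ^ 2 + ∫ τ in s..e, 2 * g τ * g' τ := hftc
    have h7 := abs_le.1 habs
    linarith [h7.2, h7.1, hftc']
  -- bound D
  have hDle : D ≤ h⁻¹ * (∫ t in I, g t ^ 2) + h * ∫ t in I, g' t ^ 2 := by
    have hpt : ∀ t ∈ I, |2 * g t * g' t| ≤ h⁻¹ * g t ^ 2 + h * g' t ^ 2 := by
      intro t _
      have h1 : h⁻¹ * (|g t| - h * |g' t|) ^ 2
          = h⁻¹ * |g t| ^ 2 - 2 * |g t| * |g' t| + h * |g' t| ^ 2 := by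
        field_simp
        ring_nf
        try ring
      have h2 : 0 ≤ h⁻¹ * (|g t| - h * |g' t|) ^ 2 :=
        mul_nonneg (inv_pos.2 hh).le (sq_nonneg _)
      have h3 : |2 * g t * g' t| = 2 * |g t| * |g' t| := by
        rw [abs_mul, abs_mul]; simp [abs_of_nonneg]
      rw [h3, ← sq_abs (g t), ← sq_abs (g' t)]
      linarith [h1, h2]
    have := setIntegral_mono_on hintgg'
      ((hintg2.const_mul h⁻¹).add (hintg'2.const_mul h)) measurableSet_Icc hpt
    calc D ≤ ∫ t in I, (h⁻¹ * g t ^ 2 + h * g' t ^ 2) := this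
      _ = h⁻¹ * (∫ t in I, g t ^ 2) + h * ∫ t in I, g' t ^ 2 := by
          rw [integral_add (hintg2.const_mul h⁻¹) (hintg'2.const_mul h),
            integral_const_mul, integral_const_mul]
  -- average key over s
  have hvol : volume.real I = h := by
    rw [measureReal_def, hI, Real.volume_Icc]
    rw [ENNReal.toReal_ofReal (by linarith)]
    ring
  have hmono := setIntegral_mono_on (integrable_const (g e ^ 2)) (by exact hintg2.add (integrable_const D) : IntegrableOn (fun t => g t ^ 2 + D) I volume)
    measurableSet_Icc key
  rw [setIntegral_const, integral_add hintg2 (integrable_const _), setIntegral_const, hvol,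
    smul_eq_mul, smul_eq_mul] at hmono
  have hfin : h * g e ^ 2 ≤ (∫ t in I, g t ^ 2) + h * D := by nlinarith
  have : h * g e ^ 2 ≤ 2 * (∫ t in I, g t ^ 2) + h ^ 2 * ∫ t in I, g' t ^ 2 := by
    have h4 : h * D ≤ (∫ t in I, g t ^ 2) + h ^ 2 * ∫ t in I, g' t ^ 2 := by
      have := mul_le_mul_of_nonneg_left hDle hh.le
      calc h * D ≤ h * (h⁻¹ * (∫ t in I, g t ^ 2) + h * ∫ t in I, g' t ^ 2) := this
        _ = (∫ t in I, g t ^ 2) + h ^ 2 * ∫ t in I, g' t ^ 2 := by field_simp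
    linarith
  have h5 : g e ^ 2 ≤ (2 * (∫ t in I, g t ^ 2) + h ^ 2 * ∫ t in I, g' t ^ 2) / h := by
    rw [le_div_iff₀ hh]
    nlinarith
  have h6 : (2 * (∫ t in I, g t ^ 2) + h ^ 2 * ∫ t in I, g' t ^ 2) / h
      = 2 / h * (∫ t in I, g t ^ 2) + h * ∫ t in I, g' t ^ 2 := by
    field_simp
  rw [h6] at h5
  exact h5

lemma hausdorff_restrict_image {ι : ℝ → ℝ × ℝ} (hiso : Isometry ι)
    {s : Set ℝ} (hs : MeasurableSet s) :
    (μH[1] : Measure (ℝ × ℝ)).restrict (ι '' s)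
      = Measure.map ι ((μH[1] : Measure ℝ).restrict s) := by
  have hemb : MeasurableEmbedding ι := hiso.continuous.measurableEmbedding hiso.injective
  ext A hA
  rw [Measure.restrict_apply hA, hemb.map_apply,
    Measure.restrict_apply (hemb.measurable hA)]
  rw [← hiso.hausdorffMeasure_image (Or.inl one_pos.le) (ι ⁻¹' A ∩ s)]
  congr 1
  rw [Set.inter_comm (ι ⁻¹' A) s, Set.image_inter_preimage, Set.inter_comm]

lemma hausdorff_edge_integral {ι : ℝ → ℝ × ℝ} (hiso : Isometry ι)
    {s : Set ℝ} (hs : MeasurableSet s) (f : ℝ × ℝ → ℝ) :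
    ∫ z in ι '' s, f z ∂μH[1] = ∫ t in s, f (ι t) := by
  have hemb : MeasurableEmbedding ι := hiso.continuous.measurableEmbedding hiso.injective
  rw [hausdorff_restrict_image hiso hs, hemb.integral_map, hausdorffMeasure_real]

lemma hausdorff_edge_integrableOn {ι : ℝ → ℝ × ℝ} (hiso : Isometry ι)
    {s : Set ℝ} (hs : MeasurableSet s) {f : ℝ × ℝ → ℝ}
    (hf : IntegrableOn (fun t => f (ι t)) s volume) :
    IntegrableOn f (ι '' s) μH[1] := by
  have hemb : MeasurableEmbedding ι := hiso.continuous.measurableEmbedding hiso.injective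
  rw [IntegrableOn, hausdorff_restrict_image hiso hs, hemb.integrable_map_iff]
  rw [hausdorffMeasure_real]
  exact hf

lemma setIntegral_union_le {X : Type*} [MeasurableSpace X] (μ : Measure X) (f : X → ℝ)
    {s t : Set X} (hsm : MeasurableSet s) (htm : MeasurableSet t)
    (hfs : IntegrableOn f s μ) (hft : IntegrableOn f t μ)
    (hnn_s : ∀ z ∈ s, 0 ≤ f z) (hnn_t : ∀ z ∈ t, 0 ≤ f z) :
    ∫ z in s ∪ t, f z ∂μ ≤ (∫ z in s, f z ∂μ) + ∫ z in t, f z ∂μ := by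
  have hle : μ.restrict (s ∪ t) ≤ μ.restrict s + μ.restrict t := Measure.restrict_union_le s t
  have hint : Integrable f (μ.restrict s + μ.restrict t) :=
    (integrable_add_measure).2 ⟨hfs, hft⟩
  have h0' : ∀ᵐ x ∂(μ.restrict s + μ.restrict t), 0 ≤ f x :=
    (ae_add_measure_iff).2
      ⟨ae_restrict_of_forall_mem hsm hnn_s, ae_restrict_of_forall_mem htm hnn_t⟩
  have h0 : 0 ≤ᵐ[μ.restrict s + μ.restrict t] f := h0'
  calc ∫ z in s ∪ t, f z ∂μ ≤ ∫ z, f z ∂(μ.restrict s + μ.restrict t) :=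
        integral_mono_measure hle h0 hint
    _ = (∫ z in s, f z ∂μ) + ∫ z in t, f z ∂μ := integral_add_measure hfs hft

lemma isometry_horiz (c : ℝ) : Isometry (fun t : ℝ => (t, c)) := by
  refine Isometry.of_dist_eq fun x y => ?_
  rw [Prod.dist_eq]
  simp

lemma isometry_vert (a : ℝ) : Isometry (fun t : ℝ => (a, t)) := by
  refine Isometry.of_dist_eq fun x y => ?_
  rw [Prod.dist_eq]
  simp

lemma restrict_prod_restrict (s t : Set ℝ) :
    (volume.restrict s).prod (volume.restrict t)
      = (volume : Measure (ℝ × ℝ)).restrict (s ×ˢ t) := by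
  rw [Measure.prod_restrict]
  rfl

lemma prodInt_iter {s t : Set ℝ} (F : ℝ × ℝ → ℝ) (hF : IntegrableOn F (s ×ˢ t) volume) :
    ∫ z in s ×ˢ t, F z = ∫ x in s, ∫ y in t, F (x, y) := by
  rw [IntegrableOn, ← restrict_prod_restrict] at hF
  calc ∫ z in s ×ˢ t, F z
      = ∫ z, F z ∂((volume.restrict s).prod (volume.restrict t)) := by
        rw [restrict_prod_restrict]
    _ = ∫ x, ∫ y, F (x, y) ∂(volume.restrict t) ∂(volume.restrict s) :=
        integral_prod F hF

lemma prodInt_swap {s t : Set ℝ} (F : ℝ × ℝ → ℝ) (hF : IntegrableOn F (s ×ˢ t) volume) :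
    ∫ z in s ×ˢ t, F z = ∫ y in t, ∫ x in s, F (x, y) := by
  rw [IntegrableOn, ← restrict_prod_restrict] at hF
  rw [prodInt_iter F (by rwa [IntegrableOn, ← restrict_prod_restrict])]
  exact integral_integral_swap hF

lemma prodInt_inner_int₁ {s t : Set ℝ} (F : ℝ × ℝ → ℝ)
    (hF : IntegrableOn F (s ×ˢ t) volume) :
    IntegrableOn (fun x => ∫ y in t, F (x, y)) s volume := by
  rw [IntegrableOn, ← restrict_prod_restrict] at hF
  exact hF.integral_prod_left

lemma prodInt_inner_int₂ {s t : Set ℝ} (F : ℝ × ℝ → ℝ)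
    (hF : IntegrableOn F (s ×ˢ t) volume) :
    IntegrableOn (fun y => ∫ x in s, F (x, y)) t volume := by
  rw [IntegrableOn, ← restrict_prod_restrict] at hF
  exact hF.integral_prod_right

lemma prodInt_mul (f g : ℝ → ℝ) (s t : Set ℝ) :
    ∫ z in s ×ˢ t, f z.1 * g z.2 = (∫ x in s, f x) * ∫ y in t, g y := by
  rw [← restrict_prod_restrict]
  exact integral_prod_mul f g

lemma prodInt_integrable_mul {f g : ℝ → ℝ} {s t : Set ℝ}
    (hf : IntegrableOn f s volume) (hg : IntegrableOn g t volume) :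
    IntegrableOn (fun z : ℝ × ℝ => f z.1 * g z.2) (s ×ˢ t) volume := by
  rw [IntegrableOn, ← restrict_prod_restrict]
  exact hf.mul_prod hg

lemma scalar_square_bound {a c h : ℝ} (ha : 0 < a) (hh : 0 < h)
    {u : ℝ × ℝ → ℝ} {U : Set (ℝ × ℝ)} (hUo : IsOpen U)
    (hK : Icc a (a + h) ×ˢ Icc c (c + h) ⊆ U)
    (hu : ContDiffOn ℝ 1 u U)
    (hmean : ∫ z in Icc a (a + h) ×ˢ Icc c (c + h), z.1 * u z = 0) :
    (∫ t in Icc a (a + h), t * u (t, c) ^ 2)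
      + (∫ t in Icc a (a + h), t * u (t, c + h) ^ 2)
      + (∫ s in Icc c (c + h), a * u (a, s) ^ 2)
      + (∫ s in Icc c (c + h), (a + h) * u (a + h, s) ^ 2)
      ≤ 12 * ((a + h) / a) ^ 2 * h *
        ∫ z in Icc a (a + h) ×ˢ Icc c (c + h),
          z.1 * ((fderiv ℝ u z) (1, 0) ^ 2 + (fderiv ℝ u z) (0, 1) ^ 2) := by
  have hI₁ : Icc a (a + h) = Icc a (a + h) := rfl
  set p₁ : ℝ × ℝ → ℝ := fun z => (fderiv ℝ u z) (1, 0) with hp₁def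
  set p₂ : ℝ × ℝ → ℝ := fun z => (fderiv ℝ u z) (0, 1) with hp₂def
  set I₁ := Icc a (a + h) with hI₁def
  set I₂ := Icc c (c + h) with hI₂def
  set K := I₁ ×ˢ I₂ with hKdef
  have hKc : IsCompact K := isCompact_Icc.prod isCompact_Icc
  have hKm : MeasurableSet K := measurableSet_Icc.prod measurableSet_Icc
  -- differentiability facts
  have hdiff : ∀ z ∈ U, HasFDerivAt u (fderiv ℝ u z) z := fun z hz =>
    ((hu.differentiableOn one_ne_zero z hz).differentiableAt (hUo.mem_nhds hz)).hasFDerivAt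
  have hcu : ContinuousOn u U := hu.continuousOn
  have hfc : ContinuousOn (fderiv ℝ u) U := hu.continuousOn_fderiv_of_isOpen hUo le_rfl
  have hp1c : ContinuousOn p₁ U := hfc.clm_apply continuousOn_const
  have hp2c : ContinuousOn p₂ U := hfc.clm_apply continuousOn_const
  have hcuK : ContinuousOn u K := hcu.mono hK
  have hp1K : ContinuousOn p₁ K := hp1c.mono hK
  have hp2K : ContinuousOn p₂ K := hp2c.mono hK
  have hmem : ∀ {t σ : ℝ}, t ∈ I₁ → σ ∈ I₂ → (t, σ) ∈ K := fun ht hσ => ⟨ht, hσ⟩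
  -- slice derivatives
  have hderivH : ∀ σ ∈ I₂, ∀ t ∈ I₁, HasDerivAt (fun τ => u (τ, σ)) (p₁ (t, σ)) t := by
    intro σ hσ t ht
    have hcurve : HasDerivAt (fun τ : ℝ => (τ, σ)) ((1 : ℝ), (0 : ℝ)) t :=
      (hasDerivAt_id t).prodMk (hasDerivAt_const t σ)
    exact (hdiff _ (hK (hmem ht hσ))).comp_hasDerivAt t hcurve
  have hderivV : ∀ τ ∈ I₁, ∀ σ ∈ I₂, HasDerivAt (fun s => u (τ, s)) (p₂ (τ, σ)) σ := by
    intro τ hτ σ hσ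
    have hcurve : HasDerivAt (fun s : ℝ => (τ, s)) ((0 : ℝ), (1 : ℝ)) σ :=
      (hasDerivAt_const σ τ).prodMk (hasDerivAt_id σ)
    exact (hdiff _ (hK (hmem hτ hσ))).comp_hasDerivAt σ hcurve
  -- slice continuity of derivatives
  have hp1slice : ∀ σ ∈ I₂, ContinuousOn (fun t => p₁ (t, σ)) I₁ := fun σ hσ =>
    hp1K.comp (continuous_id.prodMk continuous_const).continuousOn (fun t ht => hmem ht hσ)
  have hp2slice : ∀ τ ∈ I₁, ContinuousOn (fun σ => p₂ (τ, σ)) I₂ := fun τ hτ =>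
    hp2K.comp (continuous_const.prodMk continuous_id).continuousOn (fun σ hσ => hmem hτ hσ)
  have huslice₁ : ∀ σ ∈ I₂, ContinuousOn (fun t => u (t, σ)) I₁ := fun σ hσ =>
    hcuK.comp (continuous_id.prodMk continuous_const).continuousOn (fun t ht => hmem ht hσ)
  have huslice₂ : ∀ τ ∈ I₁, ContinuousOn (fun σ => u (τ, σ)) I₂ := fun τ hτ =>
    hcuK.comp (continuous_const.prodMk continuous_id).continuousOn (fun σ hσ => hmem hτ hσ)
  -- integrability on K
  have hrC : ContinuousOn (fun z : ℝ × ℝ => z.1) K := continuous_fst.continuousOn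
  have int_ru2 : IntegrableOn (fun z : ℝ × ℝ => z.1 * u z ^ 2) K volume :=
    (hrC.mul (hcuK.pow 2)).integrableOn_compact hKc
  have int_rp1 : IntegrableOn (fun z : ℝ × ℝ => z.1 * p₁ z ^ 2) K volume :=
    (hrC.mul (hp1K.pow 2)).integrableOn_compact hKc
  have int_rp2 : IntegrableOn (fun z : ℝ × ℝ => z.1 * p₂ z ^ 2) K volume :=
    (hrC.mul (hp2K.pow 2)).integrableOn_compact hKc
  have int_r : IntegrableOn (fun z : ℝ × ℝ => z.1) K volume := hrC.integrableOn_compact hKc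
  have int_ru : IntegrableOn (fun z : ℝ × ℝ => z.1 * u z) K volume :=
    (hrC.mul hcuK).integrableOn_compact hKc
  set W := ∫ z in K, z.1 * u z ^ 2 with hWdef
  set J₁ := ∫ z in K, z.1 * p₁ z ^ 2 with hJ₁def
  set J₂ := ∫ z in K, z.1 * p₂ z ^ 2 with hJ₂def
  set R := ∫ z in K, (z.1 : ℝ) with hRdef
  have hz1nn : ∀ z ∈ K, (0 : ℝ) ≤ z.1 := fun z hz => le_trans ha.le hz.1.1
  have hW0 : 0 ≤ W :=
    setIntegral_nonneg hKm fun z hz => mul_nonneg (hz1nn z hz) (sq_nonneg _)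
  have hJ₁0 : 0 ≤ J₁ :=
    setIntegral_nonneg hKm fun z hz => mul_nonneg (hz1nn z hz) (sq_nonneg _)
  have hJ₂0 : 0 ≤ J₂ :=
    setIntegral_nonneg hKm fun z hz => mul_nonneg (hz1nn z hz) (sq_nonneg _)
  have hvol₂ : volume.real I₂ = h := by
    rw [measureReal_def, hI₂def, Real.volume_Icc, ENNReal.toReal_ofReal (by linarith)]; ring
  have hone₂ : (∫ _ in I₂, (1 : ℝ)) = h := by
    rw [setIntegral_const, hvol₂, smul_eq_mul, mul_one]
  -- value of R
  have hRval : R = (∫ t in I₁, (t : ℝ)) * h := by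
    rw [hRdef, hKdef, show (fun z : ℝ × ℝ => z.1) = fun z : ℝ × ℝ => z.1 * (1 : ℝ) by
      funext z; ring]
    rw [prodInt_mul (fun t => t) (fun _ => (1 : ℝ)) I₁ I₂, hone₂]
  have hT_low : a * h ≤ ∫ t in I₁, (t : ℝ) := by
    have := setIntegral_mono_on (integrable_const a)
      ((continuous_id.continuousOn :
          ContinuousOn (fun t : ℝ => t) I₁).integrableOn_compact isCompact_Icc :
        IntegrableOn (fun t : ℝ => t) I₁ volume) measurableSet_Icc (fun t ht => ht.1)
    rwa [setIntegral_const, measureReal_def, hI₁def, Real.volume_Icc,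
      ENNReal.toReal_ofReal (by linarith), smul_eq_mul, show a + h - a = h by ring,
      mul_comm h a] at this
  have hT_high : (∫ t in I₁, (t : ℝ)) ≤ (a + h) * h := by
    have := setIntegral_mono_on
      ((continuous_id.continuousOn :
          ContinuousOn (fun t : ℝ => t) I₁).integrableOn_compact isCompact_Icc :
        IntegrableOn (fun t : ℝ => t) I₁ volume) (integrable_const (a + h)) measurableSet_Icc
      (fun t ht => ht.2)
    rwa [setIntegral_const, measureReal_def, hI₁def, Real.volume_Icc,
      ENNReal.toReal_ofReal (by linarith), smul_eq_mul, show a + h - a = h by ring,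
      mul_comm h (a + h)] at this
  have hR_pos : 0 < R := by
    rw [hRval]
    have : 0 < a * h := mul_pos ha hh
    nlinarith
  -- trace: bottom/top edges
  have edgeBT : ∀ e ∈ I₂, (∫ t in I₁, t * u (t, e) ^ 2) ≤ 2 / h * W + h * J₂ := by
    intro e he
    set Ain : ℝ → ℝ := fun t => ∫ σ in I₂, t * u (t, σ) ^ 2 with hAindef
    set Bin : ℝ → ℝ := fun t => ∫ σ in I₂, t * p₂ (t, σ) ^ 2 with hBindef
    have hAin_int : IntegrableOn Ain I₁ volume := by
      have := prodInt_inner_int₁ _ int_ru2; exact this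
    have hBin_int : IntegrableOn Bin I₁ volume := by
      have := prodInt_inner_int₁ _ int_rp2; exact this
    have hptw : ∀ t ∈ I₁, t * u (t, e) ^ 2 ≤ 2 / h * Ain t + h * Bin t := by
      intro t ht
      have hone := oneD_sq_bound (α := c) hh (hderivV t ht) (hp2slice t ht) he
      have ht0 : (0 : ℝ) ≤ t := le_trans ha.le ht.1
      have hA : Ain t = t * ∫ σ in I₂, u (t, σ) ^ 2 := integral_const_mul t _
      have hB : Bin t = t * ∫ σ in I₂, p₂ (t, σ) ^ 2 := integral_const_mul t _
      calc t * u (t, e) ^ 2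
          ≤ t * (2 / h * (∫ σ in I₂, u (t, σ) ^ 2) + h * ∫ σ in I₂, p₂ (t, σ) ^ 2) :=
            mul_le_mul_of_nonneg_left hone ht0
        _ = 2 / h * Ain t + h * Bin t := by rw [hA, hB]; ring
    have hint_lhs : IntegrableOn (fun t => t * u (t, e) ^ 2) I₁ volume :=
      ((continuous_id.continuousOn.mul ((huslice₁ e he).pow 2)).integrableOn_compact
        isCompact_Icc : IntegrableOn (fun t : ℝ => t * u (t, e) ^ 2) I₁ volume)
    have hint_rhs : IntegrableOn (fun t => 2 / h * Ain t + h * Bin t) I₁ volume := by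
      exact (hAin_int.const_mul (2 / h)).add (hBin_int.const_mul h)
    have hmono := setIntegral_mono_on hint_lhs hint_rhs measurableSet_Icc hptw
    have hWiter : W = ∫ t in I₁, Ain t := by
      rw [hWdef, hKdef]; exact prodInt_iter _ int_ru2
    have hJiter : J₂ = ∫ t in I₁, Bin t := by
      rw [hJ₂def, hKdef]; exact prodInt_iter _ int_rp2
    calc (∫ t in I₁, t * u (t, e) ^ 2) ≤ ∫ t in I₁, (2 / h * Ain t + h * Bin t) := hmono
      _ = 2 / h * (∫ t in I₁, Ain t) + h * ∫ t in I₁, Bin t := by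
          rw [integral_add (hAin_int.const_mul (2 / h)) (hBin_int.const_mul h),
            integral_const_mul, integral_const_mul]
      _ = 2 / h * W + h * J₂ := by rw [hWiter, hJiter]
  -- trace: left/right edges
  have edgeLR : ∀ e ∈ I₁, (∫ s in I₂, e * u (e, s) ^ 2)
      ≤ (a + h) / a * (2 / h * W + h * J₁) := by
    intro e he
    set Cin : ℝ → ℝ := fun s => ∫ t in I₁, t * u (t, s) ^ 2 with hCindef
    set Din : ℝ → ℝ := fun s => ∫ t in I₁, t * p₁ (t, s) ^ 2 with hDindef
    have hCin_int : IntegrableOn Cin I₂ volume := by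
      have := prodInt_inner_int₂ _ int_ru2; exact this
    have hDin_int : IntegrableOn Din I₂ volume := by
      have := prodInt_inner_int₂ _ int_rp1; exact this
    have hptw : ∀ s ∈ I₂, e * u (e, s) ^ 2
        ≤ (a + h) / a * (2 / h * Cin s + h * Din s) := by
      intro s hs
      have hone := oneD_sq_bound (α := a) hh
        (fun t ht => hderivH s hs t ht) (hp1slice s hs) he
      have hu_cmp : (∫ t in I₁, u (t, s) ^ 2) ≤ a⁻¹ * Cin s := by
        have : a⁻¹ * Cin s = ∫ t in I₁, a⁻¹ * (t * u (t, s) ^ 2) := (integral_const_mul _ _).symm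
        rw [this]
        refine setIntegral_mono_on
          ((((huslice₁ s hs).pow 2).integrableOn_compact isCompact_Icc :
            IntegrableOn (fun t => u (t, s) ^ 2) I₁ volume))
          (((continuous_const.continuousOn.mul (continuous_id.continuousOn.mul
            ((huslice₁ s hs).pow 2))).integrableOn_compact isCompact_Icc :
            IntegrableOn (fun t : ℝ => a⁻¹ * (t * u (t, s) ^ 2)) I₁ volume))
          measurableSet_Icc ?_
        intro t ht
        have h1le : 1 ≤ a⁻¹ * t := by rw [inv_mul_eq_div, le_div_iff₀ ha]; linarith [ht.1]
        have := mul_nonneg (sub_nonneg.2 h1le) (sq_nonneg (u (t, s)))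
        nlinarith
      have hp_cmp : (∫ t in I₁, p₁ (t, s) ^ 2) ≤ a⁻¹ * Din s := by
        have : a⁻¹ * Din s = ∫ t in I₁, a⁻¹ * (t * p₁ (t, s) ^ 2) := (integral_const_mul _ _).symm
        rw [this]
        refine setIntegral_mono_on
          ((((hp1slice s hs).pow 2).integrableOn_compact isCompact_Icc :
            IntegrableOn (fun t => p₁ (t, s) ^ 2) I₁ volume))
          (((continuous_const.continuousOn.mul (continuous_id.continuousOn.mul
            ((hp1slice s hs).pow 2))).integrableOn_compact isCompact_Icc :
            IntegrableOn (fun t : ℝ => a⁻¹ * (t * p₁ (t, s) ^ 2)) I₁ volume))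
          measurableSet_Icc ?_
        intro t ht
        have h1le : 1 ≤ a⁻¹ * t := by rw [inv_mul_eq_div, le_div_iff₀ ha]; linarith [ht.1]
        have := mul_nonneg (sub_nonneg.2 h1le) (sq_nonneg (p₁ (t, s)))
        nlinarith
      have hCnn : 0 ≤ Cin s := setIntegral_nonneg measurableSet_Icc fun t ht =>
        mul_nonneg (le_trans ha.le ht.1) (sq_nonneg _)
      have hDnn : 0 ≤ Din s := setIntegral_nonneg measurableSet_Icc fun t ht =>
        mul_nonneg (le_trans ha.le ht.1) (sq_nonneg _)
      have hstep : u (e, s) ^ 2 ≤ 2 / h * (a⁻¹ * Cin s) + h * (a⁻¹ * Din s) := by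
        refine le_trans hone (add_le_add ?_ ?_)
        · exact mul_le_mul_of_nonneg_left hu_cmp (by positivity)
        · exact mul_le_mul_of_nonneg_left hp_cmp hh.le
      have he_ub : e ≤ a + h := he.2
      have he_nn : (0 : ℝ) ≤ e := le_trans ha.le he.1
      have hrhs_nn : 0 ≤ 2 / h * (a⁻¹ * Cin s) + h * (a⁻¹ * Din s) := by positivity
      calc e * u (e, s) ^ 2 ≤ e * (2 / h * (a⁻¹ * Cin s) + h * (a⁻¹ * Din s)) :=
            mul_le_mul_of_nonneg_left hstep he_nn
        _ ≤ (a + h) * (2 / h * (a⁻¹ * Cin s) + h * (a⁻¹ * Din s)) :=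
            mul_le_mul_of_nonneg_right he_ub hrhs_nn
        _ = (a + h) / a * (2 / h * Cin s + h * Din s) := by ring
    have hint_lhs : IntegrableOn (fun s => e * u (e, s) ^ 2) I₂ volume :=
      ((continuous_const.continuousOn.mul ((huslice₂ e he).pow 2)).integrableOn_compact
        isCompact_Icc : IntegrableOn (fun s : ℝ => e * u (e, s) ^ 2) I₂ volume)
    have hint_rhs : IntegrableOn
        (fun s => (a + h) / a * (2 / h * Cin s + h * Din s)) I₂ volume := by
      exact ((hCin_int.const_mul (2 / h)).add (hDin_int.const_mul h)).const_mul _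
    have hmono := setIntegral_mono_on hint_lhs hint_rhs measurableSet_Icc hptw
    have hWswap : W = ∫ s in I₂, Cin s := by
      rw [hWdef, hKdef]; exact prodInt_swap _ int_ru2
    have hJswap : J₁ = ∫ s in I₂, Din s := by
      rw [hJ₁def, hKdef]; exact prodInt_swap _ int_rp1
    calc (∫ s in I₂, e * u (e, s) ^ 2)
        ≤ ∫ s in I₂, (a + h) / a * (2 / h * Cin s + h * Din s) := hmono
      _ = (a + h) / a * (2 / h * (∫ s in I₂, Cin s) + h * ∫ s in I₂, Din s) := by
          rw [integral_const_mul, integral_add (hCin_int.const_mul (2 / h))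
            (hDin_int.const_mul h), integral_const_mul, integral_const_mul]
      _ = (a + h) / a * (2 / h * W + h * J₁) := by rw [hWswap, hJswap]
  -- Poincaré inequality
  set T := ∫ t in I₁, (t : ℝ) with hTdef
  set g1 : ℝ → ℝ := fun σ => ∫ t in I₁, t * p₁ (t, σ) ^ 2 with hg1def
  set q : ℝ → ℝ := fun τ => ∫ σ in I₂, τ * p₂ (τ, σ) ^ 2 with hqdef
  have hg1_int : IntegrableOn g1 I₂ volume := by
    have := prodInt_inner_int₂ _ int_rp1; exact this
  have hq_int : IntegrableOn q I₁ volume := by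
    have := prodInt_inner_int₁ _ int_rp2; exact this
  set HH := ∫ y in K, q y.1 with hHHdef
  have hq1_int : IntegrableOn (fun y : ℝ × ℝ => q y.1) K volume := by
    have := prodInt_integrable_mul hq_int (integrable_const (1 : ℝ)) (t := I₂)
    simpa using this
  have hHHval : HH = J₂ * h := by
    have h1 : HH = (∫ τ in I₁, q τ) * h := by
      have h2 := prodInt_mul q (fun _ => (1 : ℝ)) I₁ I₂
      simp only [mul_one] at h2
      rw [hHHdef, hKdef, h2, hone₂]
    have h3 : J₂ = ∫ τ in I₁, q τ := by
      rw [hJ₂def, hKdef]; exact prodInt_iter _ int_rp2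
    rw [h1, ← h3]
  have ident : ∀ x ∈ K, (∫ y in K, y.1 * (u x - u y) ^ 2) = u x ^ 2 * R + W := by
    intro x hx
    have e2 : (fun y : ℝ × ℝ => y.1 * (u x - u y) ^ 2)
        = fun y => (u x ^ 2 * y.1 - 2 * u x * (y.1 * u y)) + y.1 * u y ^ 2 := by
      funext y; ring
    rw [e2, integral_add (show Integrable
          (fun y : ℝ × ℝ => u x ^ 2 * y.1 - 2 * u x * (y.1 * u y)) (volume.restrict K)
          from (int_r.const_mul (u x ^ 2)).sub (int_ru.const_mul (2 * u x))) int_ru2,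
      integral_sub (by exact int_r.const_mul (u x ^ 2)) (by exact int_ru.const_mul (2 * u x)),
      integral_const_mul, integral_const_mul, hmean, ← hRdef, ← hWdef]
    ring
  have DDval : (∫ x in K, x.1 * (u x ^ 2 * R + W)) = 2 * R * W := by
    have e2 : (fun x : ℝ × ℝ => x.1 * (u x ^ 2 * R + W))
        = fun x => R * (x.1 * u x ^ 2) + W * x.1 := by funext x; ring
    rw [e2, integral_add (by exact int_ru2.const_mul R) (by exact int_r.const_mul W),
      integral_const_mul, integral_const_mul, ← hWdef, ← hRdef]
    ring
  have hGbound : ∀ x ∈ K, (∫ y in K, y.1 * (u x - u y) ^ 2)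
      ≤ 2 * h * a⁻¹ * g1 x.2 * R + 2 * h * HH := by
    intro x hx
    have hx1 : x.1 ∈ I₁ := hx.1
    have hx2 : x.2 ∈ I₂ := hx.2
    have hg1nn : 0 ≤ g1 x.2 := setIntegral_nonneg measurableSet_Icc fun t ht =>
      mul_nonneg (le_trans ha.le ht.1) (sq_nonneg _)
    have hptw : ∀ y ∈ K, y.1 * (u x - u y) ^ 2
        ≤ (2 * h * a⁻¹ * g1 x.2) * y.1 + 2 * h * q y.1 := by
      intro y hy
      have hy1 : y.1 ∈ I₁ := hy.1
      have hy2 : y.2 ∈ I₂ := hy.2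
      have hynn : (0 : ℝ) ≤ y.1 := le_trans ha.le hy1.1
      have hdiffH := oneD_diff_bound (α := a) hh
        (fun t ht => hderivH x.2 hx2 t ht) (hp1slice x.2 hx2) hy1 hx1
      have hdiffV := oneD_diff_bound (α := c) hh
        (fun σ hσ => hderivV y.1 hy1 σ hσ) (hp2slice y.1 hy1) hy2 hx2
      have hxe : u (x.1, x.2) = u x := by rw [Prod.mk.eta]
      have hye : u (y.1, y.2) = u y := by rw [Prod.mk.eta]
      rw [hxe] at hdiffH
      rw [hye] at hdiffV
      -- hdiffH : (u x - u (y.1, x.2)) ^ 2 ≤ h * ∫ τ in I₁, p₁ (τ, x.2) ^ 2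
      -- hdiffV : (u (y.1, x.2) - u y) ^ 2 ≤ h * ∫ σ in I₂, p₂ (y.1, σ) ^ 2
      have hcmp1 : (∫ τ in I₁, p₁ (τ, x.2) ^ 2) ≤ a⁻¹ * g1 x.2 := by
        have heq : a⁻¹ * g1 x.2 = ∫ t in I₁, a⁻¹ * (t * p₁ (t, x.2) ^ 2) :=
          (integral_const_mul _ _).symm
        rw [heq]
        refine setIntegral_mono_on
          ((((hp1slice x.2 hx2).pow 2).integrableOn_compact isCompact_Icc :
            IntegrableOn (fun t => p₁ (t, x.2) ^ 2) I₁ volume))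
          (((continuous_const.continuousOn.mul (continuous_id.continuousOn.mul
            ((hp1slice x.2 hx2).pow 2))).integrableOn_compact isCompact_Icc :
            IntegrableOn (fun t : ℝ => a⁻¹ * (t * p₁ (t, x.2) ^ 2)) I₁ volume))
          measurableSet_Icc ?_
        intro t ht
        have h1le : 1 ≤ a⁻¹ * t := by rw [inv_mul_eq_div, le_div_iff₀ ha]; linarith [ht.1]
        have := mul_nonneg (sub_nonneg.2 h1le) (sq_nonneg (p₁ (t, x.2)))
        nlinarith
      have hq_eq : q y.1 = y.1 * ∫ σ in I₂, p₂ (y.1, σ) ^ 2 := integral_const_mul _ _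
      have hsplit : (u x - u y) ^ 2 ≤ 2 * (u x - u (y.1, x.2)) ^ 2
          + 2 * (u (y.1, x.2) - u y) ^ 2 := by
        nlinarith [sq_nonneg (u x + u y - 2 * u (y.1, x.2))]
      have hAbd : (u x - u (y.1, x.2)) ^ 2 ≤ h * (a⁻¹ * g1 x.2) :=
        le_trans hdiffH (mul_le_mul_of_nonneg_left hcmp1 hh.le)
      have hBbd : (u (y.1, x.2) - u y) ^ 2 ≤ h * ∫ σ in I₂, p₂ (y.1, σ) ^ 2 := hdiffV
      have hstep : (u x - u y) ^ 2 ≤ 2 * (h * (a⁻¹ * g1 x.2))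
          + 2 * (h * ∫ σ in I₂, p₂ (y.1, σ) ^ 2) := by
        have := add_le_add (mul_le_mul_of_nonneg_left hAbd (by norm_num : (0:ℝ) ≤ 2))
          (mul_le_mul_of_nonneg_left hBbd (by norm_num : (0:ℝ) ≤ 2))
        linarith [hsplit]
      calc y.1 * (u x - u y) ^ 2
          ≤ y.1 * (2 * (h * (a⁻¹ * g1 x.2)) + 2 * (h * ∫ σ in I₂, p₂ (y.1, σ) ^ 2)) :=
            mul_le_mul_of_nonneg_left hstep hynn
        _ = (2 * h * a⁻¹ * g1 x.2) * y.1
            + 2 * h * (y.1 * ∫ σ in I₂, p₂ (y.1, σ) ^ 2) := by ring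
        _ = (2 * h * a⁻¹ * g1 x.2) * y.1 + 2 * h * q y.1 := by rw [← hq_eq]
    have hlhs_int : IntegrableOn (fun y : ℝ × ℝ => y.1 * (u x - u y) ^ 2) K volume :=
      (hrC.mul ((continuousOn_const.sub hcuK).pow 2)).integrableOn_compact hKc
    have hrhs_int : IntegrableOn
        (fun y : ℝ × ℝ => (2 * h * a⁻¹ * g1 x.2) * y.1 + 2 * h * q y.1) K volume := by
      exact (int_r.const_mul _).add (hq1_int.const_mul _)
    have hmono := setIntegral_mono_on hlhs_int hrhs_int hKm hptw
    calc (∫ y in K, y.1 * (u x - u y) ^ 2)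
        ≤ ∫ y in K, ((2 * h * a⁻¹ * g1 x.2) * y.1 + 2 * h * q y.1) := hmono
      _ = (2 * h * a⁻¹ * g1 x.2) * R + 2 * h * HH := by
          rw [integral_add (by exact int_r.const_mul _) (by exact hq1_int.const_mul _),
            integral_const_mul, integral_const_mul, ← hRdef, ← hHHdef]
      _ = 2 * h * a⁻¹ * g1 x.2 * R + 2 * h * HH := by ring
  -- integrate the bound over x
  have hid_int : IntegrableOn (fun t : ℝ => t) I₁ volume :=
    (continuous_id.continuousOn : ContinuousOn (fun t : ℝ => t) I₁).integrableOn_compact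
      isCompact_Icc
  have hxg1_int : IntegrableOn (fun x : ℝ × ℝ => x.1 * g1 x.2) K volume := by
    have := prodInt_integrable_mul hid_int hg1_int
    exact this
  have hlhs2_int : IntegrableOn (fun x : ℝ × ℝ => x.1 * (u x ^ 2 * R + W)) K volume := by
    refine ContinuousOn.integrableOn_compact hKc ?_
    exact hrC.mul (((hcuK.pow 2).mul continuousOn_const).add continuousOn_const)
  have hrhs2_int : IntegrableOn
      (fun x : ℝ × ℝ => (2 * h * a⁻¹ * R) * (x.1 * g1 x.2) + (2 * h * HH) * x.1) K volume := by
    exact (hxg1_int.const_mul _).add (int_r.const_mul _)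
  have houter : 2 * R * W ≤ (2 * h * a⁻¹ * R) * (T * J₁) + (2 * h * HH) * R := by
    rw [← DDval]
    have hptw2 : ∀ x ∈ K, x.1 * (u x ^ 2 * R + W)
        ≤ (2 * h * a⁻¹ * R) * (x.1 * g1 x.2) + (2 * h * HH) * x.1 := by
      intro x hx
      have hxnn : (0 : ℝ) ≤ x.1 := le_trans ha.le hx.1.1
      have h1 : u x ^ 2 * R + W ≤ 2 * h * a⁻¹ * g1 x.2 * R + 2 * h * HH := by
        rw [← ident x hx]; exact hGbound x hx
      calc x.1 * (u x ^ 2 * R + W)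
          ≤ x.1 * (2 * h * a⁻¹ * g1 x.2 * R + 2 * h * HH) :=
            mul_le_mul_of_nonneg_left h1 hxnn
        _ = (2 * h * a⁻¹ * R) * (x.1 * g1 x.2) + (2 * h * HH) * x.1 := by ring
    have hmono2 := setIntegral_mono_on hlhs2_int hrhs2_int hKm hptw2
    have hval : (∫ x in K, ((2 * h * a⁻¹ * R) * (x.1 * g1 x.2) + (2 * h * HH) * x.1))
        = (2 * h * a⁻¹ * R) * (T * J₁) + (2 * h * HH) * R := by
      rw [integral_add (by exact hxg1_int.const_mul _) (by exact int_r.const_mul _),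
        integral_const_mul, integral_const_mul, ← hRdef]
      have hsw : (∫ x in K, x.1 * g1 x.2) = T * J₁ := by
        rw [hKdef, prodInt_mul (fun t => t) g1 I₁ I₂, ← hTdef]
        have : J₁ = ∫ σ in I₂, g1 σ := by
          rw [hJ₁def, hKdef]; exact prodInt_swap _ int_rp1
        rw [← this]
      rw [hsw]
    rw [← hval]
    exact hmono2
  have hρ1 : 1 ≤ (a + h) / a := by rw [le_div_iff₀ ha]; linarith
  have hPoin : W ≤ (a + h) / a * h ^ 2 * (J₁ + J₂) := by
    have h2R : (0 : ℝ) < 2 * R := by linarith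
    have hstep : W ≤ h * a⁻¹ * (T * J₁) + h * HH := by
      have hre : (2 * h * a⁻¹ * R) * (T * J₁) + (2 * h * HH) * R
          = (2 * R) * (h * a⁻¹ * (T * J₁) + h * HH) := by ring
      rw [hre] at houter
      have := le_of_mul_le_mul_left (by linarith [houter] :
        (2 * R) * W ≤ (2 * R) * (h * a⁻¹ * (T * J₁) + h * HH)) h2R
      exact this
    rw [hHHval] at hstep
    have hT1 : h * a⁻¹ * (T * J₁) ≤ h * a⁻¹ * (((a + h) * h) * J₁) := by
      refine mul_le_mul_of_nonneg_left ?_ (by positivity)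
      exact mul_le_mul_of_nonneg_right hT_high hJ₁0
    have he1 : h * a⁻¹ * (((a + h) * h) * J₁) = (a + h) / a * h ^ 2 * J₁ := by
      field_simp
    have he2 : h * (J₂ * h) = h ^ 2 * J₂ := by ring
    have hfin : W ≤ (a + h) / a * h ^ 2 * J₁ + h ^ 2 * J₂ := by
      rw [← he1]
      linarith [hT1, hstep, he2.symm.le, he2.le]
    have hlast : h ^ 2 * J₂ ≤ (a + h) / a * h ^ 2 * J₂ := by
      have := mul_nonneg (mul_nonneg (sub_nonneg.2 hρ1) (sq_nonneg h)) hJ₂0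
      nlinarith
    nlinarith [hfin, hlast]
  -- final assembly
  have hfinal_eq : (∫ z in K, z.1 * ((fderiv ℝ u z) (1, 0) ^ 2 + (fderiv ℝ u z) (0, 1) ^ 2))
      = J₁ + J₂ := by
    have e : (fun z : ℝ × ℝ => z.1 * ((fderiv ℝ u z) (1, 0) ^ 2 + (fderiv ℝ u z) (0, 1) ^ 2))
        = fun z => z.1 * p₁ z ^ 2 + z.1 * p₂ z ^ 2 := by
      funext z
      show z.1 * (p₁ z ^ 2 + p₂ z ^ 2) = z.1 * p₁ z ^ 2 + z.1 * p₂ z ^ 2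
      ring
    rw [e, integral_add int_rp1 int_rp2, ← hJ₁def, ← hJ₂def]
  rw [hfinal_eq]
  have hcmem : c ∈ I₂ := ⟨le_rfl, by linarith⟩
  have hchmem : c + h ∈ I₂ := ⟨by linarith, le_rfl⟩
  have hamem : a ∈ I₁ := ⟨le_rfl, by linarith⟩
  have hahmem : a + h ∈ I₁ := ⟨by linarith, le_rfl⟩
  have hE1 := edgeBT c hcmem
  have hE2 := edgeBT (c + h) hchmem
  have hE3 := edgeLR a hamem
  have hE4 := edgeLR (a + h) hahmem
  set ρ := (a + h) / a with hρdef
  have hρ0 : (0 : ℝ) ≤ ρ := by linarith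
  have hXnn : (0 : ℝ) ≤ h * (J₁ + J₂) := mul_nonneg hh.le (by linarith)
  have hWh : 2 / h * W ≤ 2 * ρ * h * (J₁ + J₂) := by
    have h1 := mul_le_mul_of_nonneg_left hPoin (by positivity : (0 : ℝ) ≤ 2 / h)
    have h2 : 2 / h * (ρ * h ^ 2 * (J₁ + J₂)) = 2 * ρ * h * (J₁ + J₂) := by
      field_simp
    linarith [h1, h2.le, h2.ge]
  have hB1 : 2 / h * W + h * J₂ ≤ (2 * ρ + 1) * (h * (J₁ + J₂)) := by
    nlinarith [mul_nonneg hh.le hJ₁0]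
  have hB2 : 2 / h * W + h * J₁ ≤ (2 * ρ + 1) * (h * (J₁ + J₂)) := by
    nlinarith [mul_nonneg hh.le hJ₂0]
  have hL : ρ * (2 / h * W + h * J₁) ≤ ρ * ((2 * ρ + 1) * (h * (J₁ + J₂))) :=
    mul_le_mul_of_nonneg_left hB2 hρ0
  have hE3' : (∫ s in I₂, a * u (a, s) ^ 2) ≤ ρ * (2 / h * W + h * J₁) := hE3
  have hE4' : (∫ s in I₂, (a + h) * u (a + h, s) ^ 2) ≤ ρ * (2 / h * W + h * J₁) := hE4
  have hqnn : (0 : ℝ) ≤ (ρ - 1) * (8 * ρ + 2) * (h * (J₁ + J₂)) :=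
    mul_nonneg (mul_nonneg (sub_nonneg.2 hρ1) (by linarith)) hXnn
  nlinarith [hE1, hE2, hE3', hE4', hB1, hL, hqnn]

lemma image_horiz (c : ℝ) (s : Set ℝ) :
    (fun t : ℝ => (t, c)) '' s = s ×ˢ ({c} : Set ℝ) := by
  ext ⟨x, y⟩
  simp only [Set.mem_image, Set.mem_prod, Set.mem_singleton_iff, Prod.mk.injEq]
  constructor
  · rintro ⟨t, ht, rfl, rfl⟩; exact ⟨ht, rfl⟩
  · rintro ⟨hx, rfl⟩; exact ⟨x, hx, rfl, rfl⟩

lemma image_vert (a : ℝ) (s : Set ℝ) :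
    (fun t : ℝ => (a, t)) '' s = ({a} : Set ℝ) ×ˢ s := by
  ext ⟨x, y⟩
  simp only [Set.mem_image, Set.mem_prod, Set.mem_singleton_iff, Prod.mk.injEq]
  constructor
  · rintro ⟨t, ht, rfl, rfl⟩; exact ⟨rfl, ht⟩
  · rintro ⟨rfl, hy⟩; exact ⟨y, hy, rfl, rfl⟩

/-- Upper bound of the stabilization norm-equivalence: for vector fields that are
`r`-weighted mean-zero on the square element, the boundary stabilization is bounded
by the weighted energy seminorm, with constant independent of the element size. -/
theorem stabilization_upper_bound :
    ∃ C : ℝ, 0 < C ∧ ∀ (h : ℝ), 0 < h → ∀ b : ℝ × ℝ, 0 < b.1 →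
      ∀ v : ℝ × ℝ → ℝ × ℝ,
        (∃ U : Set (ℝ × ℝ), IsOpen U ∧ closure (sqEl b h) ⊆ U ∧ ContDiffOn ℝ 1 v U) →
        (∫ x in sqEl b h, x.1 • v x ∂volume) = 0 →
        h⁻¹ * (∫ x in frontier (sqEl b h),
            2 * π * x.1 * ((v x).1 ^ 2 + (v x).2 ^ 2) ∂(μH[1]))
          ≤ C * ((b.1 + h) / b.1) ^ 2 *
            (∫ x in sqEl b h,
              x.1 * (gradSq (fun y => (v y).1) x + gradSq (fun y => (v y).2) x) ∂volume) := by
  refine ⟨24 * π, by positivity, ?_⟩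
  intro h hh b hb v hvU hmean
  obtain ⟨U, hUo, hUsub, hv⟩ := hvU
  set a := b.1 with hadef
  set c := b.2 with hcdef
  have hQdef : sqEl b h = Set.Ioo a (a + h) ×ˢ Set.Ioo c (c + h) := rfl
  set K := Set.Icc a (a + h) ×ˢ Set.Icc c (c + h) with hKdef
  have hclos : closure (sqEl b h) = K := by
    rw [hQdef, closure_prod_eq, closure_Ioo (by linarith : a ≠ a + h),
      closure_Ioo (by linarith : c ≠ c + h)]
  have hKU : K ⊆ U := hclos ▸ hUsub
  have hKc : IsCompact K := isCompact_Icc.prod isCompact_Icc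
  have hQsubK : sqEl b h ⊆ K := by
    rw [hQdef, hKdef]
    exact Set.prod_mono Set.Ioo_subset_Icc_self Set.Ioo_subset_Icc_self
  -- null boundary, restrict equality
  have hsing : ∀ x y : ℝ, volume ({x, y} : Set ℝ) = 0 := by
    intro x y
    rw [Set.insert_eq]
    exact measure_union_null Real.volume_singleton Real.volume_singleton
  have hnull : volume (K \ sqEl b h) = 0 := by
    have hsub : K \ sqEl b h ⊆
        ((Set.Icc a (a + h) \ Set.Ioo a (a + h)) ×ˢ Set.Icc c (c + h))
        ∪ (Set.Icc a (a + h) ×ˢ (Set.Icc c (c + h) \ Set.Ioo c (c + h))) := by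
      rintro ⟨x, y⟩ ⟨⟨hx, hy⟩, hz⟩
      by_cases hxI : x ∈ Set.Ioo a (a + h)
      · exact Or.inr ⟨hx, hy, fun hyI => hz ⟨hxI, hyI⟩⟩
      · exact Or.inl ⟨⟨hx, hxI⟩, hy⟩
    refine measure_mono_null hsub (measure_union_null ?_ ?_)
    · rw [Set.Icc_diff_Ioo_same (by linarith : a ≤ a + h)]
      have hp : (volume : Measure (ℝ × ℝ)) (({a, a + h} : Set ℝ) ×ˢ Set.Icc c (c + h))
          = volume ({a, a + h} : Set ℝ) * volume (Set.Icc c (c + h)) := Measure.prod_prod _ _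
      rw [hp, hsing, zero_mul]
    · rw [Set.Icc_diff_Ioo_same (by linarith : c ≤ c + h)]
      have hp : (volume : Measure (ℝ × ℝ)) (Set.Icc a (a + h) ×ˢ ({c, c + h} : Set ℝ))
          = volume (Set.Icc a (a + h)) * volume ({c, c + h} : Set ℝ) := Measure.prod_prod _ _
      rw [hp, hsing, mul_zero]
  have haeQK : sqEl b h =ᵐ[volume] K := by
    rw [ae_eq_set]
    exact ⟨measure_mono_null (fun z hz => (hz.2 (hQsubK hz.1)).elim) measure_empty, hnull⟩
  have hresQK : volume.restrict (sqEl b h) = volume.restrict K :=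
    Measure.restrict_congr_set haeQK
  -- components
  set u₁ : ℝ × ℝ → ℝ := fun y => (v y).1 with hu₁def
  set u₂ : ℝ × ℝ → ℝ := fun y => (v y).2 with hu₂def
  have hv1 : ContDiffOn ℝ 1 u₁ U := hv.fst
  have hv2 : ContDiffOn ℝ 1 u₂ U := hv.snd
  have hvc : ContinuousOn v K := hv.continuousOn.mono hKU
  have hIntsm : IntegrableOn (fun x : ℝ × ℝ => x.1 • v x) (sqEl b h) volume :=
    ((continuous_fst.continuousOn.smul hvc).integrableOn_compact hKc).mono_set hQsubK
  have hmean₁ : ∫ z in K, z.1 * u₁ z = 0 := by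
    have hL := (ContinuousLinearMap.fst ℝ ℝ ℝ).integral_comp_comm hIntsm
    rw [hmean, map_zero] at hL
    have e : (fun x : ℝ × ℝ => (ContinuousLinearMap.fst ℝ ℝ ℝ) (x.1 • v x))
        = fun x : ℝ × ℝ => x.1 * u₁ x := by
      funext x
      simp [hu₁def, smul_eq_mul]
    rw [hresQK, e] at hL
    exact hL
  have hmean₂ : ∫ z in K, z.1 * u₂ z = 0 := by
    have hL := (ContinuousLinearMap.snd ℝ ℝ ℝ).integral_comp_comm hIntsm
    rw [hmean, map_zero] at hL
    have e : (fun x : ℝ × ℝ => (ContinuousLinearMap.snd ℝ ℝ ℝ) (x.1 • v x))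
        = fun x : ℝ × ℝ => x.1 * u₂ x := by
      funext x
      simp [hu₂def, smul_eq_mul]
    rw [hresQK, e] at hL
    exact hL
  have hS1 := scalar_square_bound hb hh hUo hKU hv1 hmean₁
  have hS2 := scalar_square_bound hb hh hUo hKU hv2 hmean₂
  rw [← hKdef] at hS1 hS2
  -- the boundary integrand
  set f : ℝ × ℝ → ℝ := fun z => 2 * π * z.1 * ((v z).1 ^ 2 + (v z).2 ^ 2) with hfdef
  have hcm : c ∈ Set.Icc c (c + h) := ⟨le_rfl, by linarith⟩
  have hchm : c + h ∈ Set.Icc c (c + h) := ⟨by linarith, le_rfl⟩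
  have ham : a ∈ Set.Icc a (a + h) := ⟨le_rfl, by linarith⟩
  have hahm : a + h ∈ Set.Icc a (a + h) := ⟨by linarith, le_rfl⟩
  -- slice continuity
  have hvslice_h : ∀ e ∈ Set.Icc c (c + h),
      ContinuousOn (fun t : ℝ => v (t, e)) (Set.Icc a (a + h)) := fun e he =>
    hvc.comp (continuous_id.prodMk continuous_const).continuousOn (fun t ht => ⟨ht, he⟩)
  have hvslice_v : ∀ e ∈ Set.Icc a (a + h),
      ContinuousOn (fun s : ℝ => v (e, s)) (Set.Icc c (c + h)) := fun e he =>
    hvc.comp (continuous_const.prodMk continuous_id).continuousOn (fun s hs => ⟨he, hs⟩)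
  -- 1D integrability of edge integrands
  have int_h1 : ∀ e ∈ Set.Icc c (c + h),
      IntegrableOn (fun t : ℝ => t * u₁ (t, e) ^ 2) (Set.Icc a (a + h)) volume := fun e he =>
    ((continuous_id.continuousOn.mul (((hvslice_h e he).fst).pow 2)).integrableOn_compact
      isCompact_Icc : IntegrableOn (fun t : ℝ => t * u₁ (t, e) ^ 2) _ volume)
  have int_h2 : ∀ e ∈ Set.Icc c (c + h),
      IntegrableOn (fun t : ℝ => t * u₂ (t, e) ^ 2) (Set.Icc a (a + h)) volume := fun e he =>
    ((continuous_id.continuousOn.mul (((hvslice_h e he).snd).pow 2)).integrableOn_compact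
      isCompact_Icc : IntegrableOn (fun t : ℝ => t * u₂ (t, e) ^ 2) _ volume)
  have int_v1 : ∀ e ∈ Set.Icc a (a + h),
      IntegrableOn (fun s : ℝ => e * u₁ (e, s) ^ 2) (Set.Icc c (c + h)) volume := fun e he =>
    ((continuousOn_const.mul (((hvslice_v e he).fst).pow 2)).integrableOn_compact
      isCompact_Icc : IntegrableOn (fun s : ℝ => e * u₁ (e, s) ^ 2) _ volume)
  have int_v2 : ∀ e ∈ Set.Icc a (a + h),
      IntegrableOn (fun s : ℝ => e * u₂ (e, s) ^ 2) (Set.Icc c (c + h)) volume := fun e he =>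
    ((continuousOn_const.mul (((hvslice_v e he).snd).pow 2)).integrableOn_compact
      isCompact_Icc : IntegrableOn (fun s : ℝ => e * u₂ (e, s) ^ 2) _ volume)
  have int_fh : ∀ e ∈ Set.Icc c (c + h),
      IntegrableOn (fun t : ℝ => f (t, e)) (Set.Icc a (a + h)) volume := by
    intro e he
    have hcont : ContinuousOn
        (fun t : ℝ => 2 * π * t * ((v (t, e)).1 ^ 2 + (v (t, e)).2 ^ 2))
        (Set.Icc a (a + h)) :=
      (continuousOn_const.mul continuous_id.continuousOn).mul
        ((((hvslice_h e he).fst).pow 2).add (((hvslice_h e he).snd).pow 2))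
    exact hcont.integrableOn_compact isCompact_Icc
  have int_fv : ∀ e ∈ Set.Icc a (a + h),
      IntegrableOn (fun s : ℝ => f (e, s)) (Set.Icc c (c + h)) volume := by
    intro e he
    have hcont : ContinuousOn
        (fun s : ℝ => 2 * π * e * ((v (e, s)).1 ^ 2 + (v (e, s)).2 ^ 2))
        (Set.Icc c (c + h)) :=
      continuousOn_const.mul
        ((((hvslice_v e he).fst).pow 2).add (((hvslice_v e he).snd).pow 2))
    exact hcont.integrableOn_compact isCompact_Icc
  -- edge measurability
  have hmEh : ∀ e : ℝ, MeasurableSet ((fun t : ℝ => (t, e)) '' Set.Icc a (a + h)) := fun e =>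
    ((isCompact_Icc.image (continuous_id.prodMk continuous_const)).isClosed).measurableSet
  have hmEv : ∀ e : ℝ, MeasurableSet ((fun s : ℝ => (e, s)) '' Set.Icc c (c + h)) := fun e =>
    ((isCompact_Icc.image (continuous_const.prodMk continuous_id)).isClosed).measurableSet
  -- μH-integrability on edges
  have hIedge_h : ∀ e ∈ Set.Icc c (c + h),
      IntegrableOn f ((fun t : ℝ => (t, e)) '' Set.Icc a (a + h)) μH[1] := fun e he =>
    hausdorff_edge_integrableOn (isometry_horiz e) measurableSet_Icc (int_fh e he)
  have hIedge_v : ∀ e ∈ Set.Icc a (a + h),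
      IntegrableOn f ((fun s : ℝ => (e, s)) '' Set.Icc c (c + h)) μH[1] := fun e he =>
    hausdorff_edge_integrableOn (isometry_vert e) measurableSet_Icc (int_fv e he)
  -- nonnegativity on edges
  have hfnn_h : ∀ e : ℝ, ∀ z ∈ (fun t : ℝ => (t, e)) '' Set.Icc a (a + h), 0 ≤ f z := by
    rintro e z ⟨t, ht, rfl⟩
    exact mul_nonneg (mul_nonneg (by positivity) (le_trans hb.le ht.1)) (by positivity)
  have hfnn_v : ∀ e : ℝ, (0 : ℝ) ≤ e →
      ∀ z ∈ (fun s : ℝ => (e, s)) '' Set.Icc c (c + h), 0 ≤ f z := by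
    rintro e he0 z ⟨s, hs, rfl⟩
    exact mul_nonneg (mul_nonneg (by positivity) he0) (by positivity)
  -- frontier decomposition
  have hfront : frontier (sqEl b h)
      = (((fun t : ℝ => (t, c)) '' Set.Icc a (a + h))
          ∪ ((fun t : ℝ => (t, c + h)) '' Set.Icc a (a + h)))
        ∪ (((fun s : ℝ => (a, s)) '' Set.Icc c (c + h))
          ∪ ((fun s : ℝ => (a + h, s)) '' Set.Icc c (c + h))) := by
    rw [hQdef, frontier_prod_eq, closure_Ioo (show a ≠ a + h by linarith),
      closure_Ioo (show c ≠ c + h by linarith),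
      frontier_Ioo (show a < a + h by linarith), frontier_Ioo (show c < c + h by linarith),
      image_horiz, image_horiz, image_vert, image_vert,
      Set.insert_eq c {c + h}, Set.insert_eq a {a + h}, Set.prod_union, Set.union_prod]
  -- split the boundary integral
  have hsplit : (∫ z in frontier (sqEl b h), f z ∂μH[1])
      ≤ (∫ z in (fun t : ℝ => (t, c)) '' Set.Icc a (a + h), f z ∂μH[1])
        + (∫ z in (fun t : ℝ => (t, c + h)) '' Set.Icc a (a + h), f z ∂μH[1])
        + ((∫ z in (fun s : ℝ => (a, s)) '' Set.Icc c (c + h), f z ∂μH[1])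
        + (∫ z in (fun s : ℝ => (a + h, s)) '' Set.Icc c (c + h), f z ∂μH[1])) := by
    rw [hfront]
    have h12 := setIntegral_union_le μH[1] f (hmEh c) (hmEh (c + h))
      (hIedge_h c hcm) (hIedge_h (c + h) hchm) (hfnn_h c) (hfnn_h (c + h))
    have h34 := setIntegral_union_le μH[1] f (hmEv a) (hmEv (a + h))
      (hIedge_v a ham) (hIedge_v (a + h) hahm)
      (hfnn_v a hb.le) (hfnn_v (a + h) (by linarith))
    have htop := setIntegral_union_le μH[1] f ((hmEh c).union (hmEh (c + h)))
      ((hmEv a).union (hmEv (a + h)))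
      ((hIedge_h c hcm).union (hIedge_h (c + h) hchm))
      ((hIedge_v a ham).union (hIedge_v (a + h) hahm))
      (fun z hz => hz.elim (hfnn_h c z) (hfnn_h (c + h) z))
      (fun z hz => hz.elim (hfnn_v a hb.le z) (hfnn_v (a + h) (by linarith) z))
    linarith
  -- edge evaluations
  have hEdgeH : ∀ e ∈ Set.Icc c (c + h),
      (∫ z in (fun t : ℝ => (t, e)) '' Set.Icc a (a + h), f z ∂μH[1])
        = 2 * π * ((∫ t in Set.Icc a (a + h), t * u₁ (t, e) ^ 2)
          + ∫ t in Set.Icc a (a + h), t * u₂ (t, e) ^ 2) := by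
    intro e he
    have h1 : (∫ z in (fun t : ℝ => (t, e)) '' Set.Icc a (a + h), f z ∂μH[1])
        = ∫ t in Set.Icc a (a + h), f (t, e) :=
      hausdorff_edge_integral (isometry_horiz e) measurableSet_Icc f
    have h2 : (fun t : ℝ => f (t, e))
        = fun t : ℝ => 2 * π * (t * u₁ (t, e) ^ 2 + t * u₂ (t, e) ^ 2) := by
      funext t
      show 2 * π * t * ((v (t, e)).1 ^ 2 + (v (t, e)).2 ^ 2) = _
      simp only [hu₁def, hu₂def]
      ring
    rw [h1, h2, integral_const_mul, integral_add (int_h1 e he) (int_h2 e he)]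
  have hEdgeV : ∀ e ∈ Set.Icc a (a + h),
      (∫ z in (fun s : ℝ => (e, s)) '' Set.Icc c (c + h), f z ∂μH[1])
        = 2 * π * ((∫ s in Set.Icc c (c + h), e * u₁ (e, s) ^ 2)
          + ∫ s in Set.Icc c (c + h), e * u₂ (e, s) ^ 2) := by
    intro e he
    have h1 : (∫ z in (fun s : ℝ => (e, s)) '' Set.Icc c (c + h), f z ∂μH[1])
        = ∫ s in Set.Icc c (c + h), f (e, s) :=
      hausdorff_edge_integral (isometry_vert e) measurableSet_Icc f
    have h2 : (fun s : ℝ => f (e, s))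
        = fun s : ℝ => 2 * π * (e * u₁ (e, s) ^ 2 + e * u₂ (e, s) ^ 2) := by
      funext s
      show 2 * π * e * ((v (e, s)).1 ^ 2 + (v (e, s)).2 ^ 2) = _
      simp only [hu₁def, hu₂def]
      ring
    rw [h1, h2, integral_const_mul, integral_add (int_v1 e he) (int_v2 e he)]
  -- the volume integrals of the gradient
  have hfc1 : ContinuousOn (fderiv ℝ u₁) K := (hv1.continuousOn_fderiv_of_isOpen hUo le_rfl).mono hKU
  have hfc2 : ContinuousOn (fderiv ℝ u₂) K := (hv2.continuousOn_fderiv_of_isOpen hUo le_rfl).mono hKU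
  have hint1 : IntegrableOn
      (fun x : ℝ × ℝ => x.1 * ((fderiv ℝ u₁ x) (1, 0) ^ 2 + (fderiv ℝ u₁ x) (0, 1) ^ 2))
      K volume :=
    (continuous_fst.continuousOn.mul (((hfc1.clm_apply continuousOn_const).pow 2).add
      ((hfc1.clm_apply continuousOn_const).pow 2))).integrableOn_compact hKc
  have hint2 : IntegrableOn
      (fun x : ℝ × ℝ => x.1 * ((fderiv ℝ u₂ x) (1, 0) ^ 2 + (fderiv ℝ u₂ x) (0, 1) ^ 2))
      K volume :=
    (continuous_fst.continuousOn.mul (((hfc2.clm_apply continuousOn_const).pow 2).add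
      ((hfc2.clm_apply continuousOn_const).pow 2))).integrableOn_compact hKc
  have hJJ : (∫ x in sqEl b h, x.1 * (gradSq u₁ x + gradSq u₂ x))
      = (∫ z in K, z.1 * ((fderiv ℝ u₁ z) (1, 0) ^ 2 + (fderiv ℝ u₁ z) (0, 1) ^ 2))
        + ∫ z in K, z.1 * ((fderiv ℝ u₂ z) (1, 0) ^ 2 + (fderiv ℝ u₂ z) (0, 1) ^ 2) := by
    rw [hresQK]
    have e : (fun x : ℝ × ℝ => x.1 * (gradSq u₁ x + gradSq u₂ x))
        = fun x : ℝ × ℝ =>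
          x.1 * ((fderiv ℝ u₁ x) (1, 0) ^ 2 + (fderiv ℝ u₁ x) (0, 1) ^ 2)
          + x.1 * ((fderiv ℝ u₂ x) (1, 0) ^ 2 + (fderiv ℝ u₂ x) (0, 1) ^ 2) := by
      funext x
      simp only [gradSq]
      ring
    rw [e, integral_add hint1 hint2]
  -- final chain
  set JJ₁ := ∫ z in K, z.1 * ((fderiv ℝ u₁ z) (1, 0) ^ 2 + (fderiv ℝ u₁ z) (0, 1) ^ 2)
    with hJJ₁def
  set JJ₂ := ∫ z in K, z.1 * ((fderiv ℝ u₂ z) (1, 0) ^ 2 + (fderiv ℝ u₂ z) (0, 1) ^ 2)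
    with hJJ₂def
  have hstep1 : (∫ z in frontier (sqEl b h), f z ∂μH[1])
      ≤ 2 * π * (12 * ((a + h) / a) ^ 2 * h * JJ₁ + 12 * ((a + h) / a) ^ 2 * h * JJ₂) := by
    have hsum := hsplit
    rw [hEdgeH c hcm, hEdgeH (c + h) hchm, hEdgeV a ham, hEdgeV (a + h) hahm] at hsum
    have h2π : (0 : ℝ) ≤ 2 * π := by positivity
    nlinarith [hS1, hS2, hsum]
  calc h⁻¹ * (∫ z in frontier (sqEl b h), f z ∂μH[1])
      ≤ h⁻¹ * (2 * π * (12 * ((a + h) / a) ^ 2 * h * JJ₁ + 12 * ((a + h) / a) ^ 2 * h * JJ₂)) :=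
        mul_le_mul_of_nonneg_left hstep1 (inv_nonneg.2 hh.le)
    _ = 24 * π * ((a + h) / a) ^ 2 * (JJ₁ + JJ₂) := by
        field_simp
        ring
    _ = 24 * π * ((a + h) / a) ^ 2 *
        (∫ x in sqEl b h, x.1 * (gradSq u₁ x + gradSq u₂ x)) := by rw [hJJ]
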